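/- Let K ⊂ ℝ be a Cantor set, let I be an interval with K̃ := K ∩ I a Cantor set, let ε ∈ (0,1), and suppose g is a continuously differentiable monotone function on I satisfying | |g′(x)|/|g′(y)| − 1 | < ε for all x, y ∈ I. Then for every bounded gap endpoint u of K̃, the image of the ε-bridge satisfies g(B_ε(u)) ⊆ B_{ε²}(g(u)) (the ε²-bridge of g(K̃) at g(u)), and consequently the ε²-thickness of g(K̃) satisfies τ_{ε²}(g(K̃)) ≥ (1 − ε)·τ_ε(K̃). -/

import Mathlib

open Set

/-- A Cantor set: non-empty, compact, perfect, totally disconnected subset of ℝ. -/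
def IsCantorSet (K : Set ℝ) : Prop :=
  K.Nonempty ∧ IsCompact K ∧ Perfect K ∧ IsTotallyDisconnected K

def IsBoundedGap (K : Set ℝ) (a b : ℝ) : Prop :=
  a < b ∧ a ∈ K ∧ b ∈ K ∧ Set.Ioo a b ∩ K = ∅

/-- The right endpoint of the `ε`-bridge at `u`, where `u` is the right endpoint of a bounded
gap of length `ℓ`: the nearest point `a > u` which is either `sSup K` or the left endpoint of
a gap `(a, b)` with `b - a > (1 - ε) ℓ`. -/
noncomputable def rightBridgeEndE (K : Set ℝ) (u ℓ ε : ℝ) : ℝ :=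
  sInf {a : ℝ | u < a ∧ (a = sSup K ∨ ∃ b, IsBoundedGap K a b ∧ (1 - ε) * ℓ < b - a)}

noncomputable def leftBridgeEndE (K : Set ℝ) (u ℓ ε : ℝ) : ℝ :=
  sSup {a : ℝ | a < u ∧ (a = sInf K ∨ ∃ b, IsBoundedGap K b a ∧ (1 - ε) * ℓ < a - b)}

/-- The set of `ε`-thickness values `|B_ε(u)|/|G|` at endpoints of bounded gaps of `K`. -/
def epsThicknessValues (K : Set ℝ) (ε : ℝ) : Set ℝ :=
  {r : ℝ | ∃ a b : ℝ, IsBoundedGap K a b ∧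
      (r = (rightBridgeEndE K b (b - a) ε - b) / (b - a) ∨
       r = (a - leftBridgeEndE K a (b - a) ε) / (b - a))}

/-- The `ε`-thickness `τ_ε(K)`. -/
noncomputable def epsThickness (K : Set ℝ) (ε : ℝ) : ℝ := sInf (epsThicknessValues K ε)

/-! ### Auxiliary lemmas -/

lemma real_sInf_neg (s : Set ℝ) : sInf (-s) = -sSup s := by
  rw [Real.sInf_def, neg_neg]

lemma real_sSup_neg (s : Set ℝ) : sSup (-s) = -sInf s := by
  rw [Real.sInf_def, neg_neg]

lemma gap_neg {K : Set ℝ} {a b : ℝ} (h : IsBoundedGap K a b) : IsBoundedGap (-K) (-b) (-a) := by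
  obtain ⟨hab, ha, hb, hg⟩ := h
  refine ⟨by linarith, by simpa using hb, by simpa using ha, ?_⟩
  rw [eq_empty_iff_forall_notMem]
  rintro x ⟨hx, hxK⟩
  have : -x ∈ Ioo a b ∩ K := ⟨⟨by linarith [hx.2], by linarith [hx.1]⟩, by simpa using hxK⟩
  rw [hg] at this
  exact this

lemma gap_neg_iff {K : Set ℝ} {a b : ℝ} : IsBoundedGap (-K) a b ↔ IsBoundedGap K (-b) (-a) := by
  constructor
  · intro h
    have := gap_neg h
    simpa using this
  · intro h
    have := gap_neg h
    simpa using this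

lemma rB_neg (K : Set ℝ) (u ℓ ε : ℝ) :
    rightBridgeEndE (-K) (-u) ℓ ε = - leftBridgeEndE K u ℓ ε := by
  have hset : {a : ℝ | -u < a ∧ (a = sSup (-K) ∨
      ∃ b, IsBoundedGap (-K) a b ∧ (1 - ε) * ℓ < b - a)} =
      -{a : ℝ | a < u ∧ (a = sInf K ∨ ∃ b, IsBoundedGap K b a ∧ (1 - ε) * ℓ < a - b)} := by
    ext x
    simp only [Set.mem_neg, Set.mem_setOf_eq, real_sSup_neg]
    constructor
    · rintro ⟨hx, h | ⟨b, hb, hlen⟩⟩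
      · exact ⟨by linarith, Or.inl (by linarith)⟩
      · refine ⟨by linarith, Or.inr ⟨-b, ?_, by linarith⟩⟩
        have := gap_neg_iff.mp hb
        simpa using this
    · rintro ⟨hx, h | ⟨b, hb, hlen⟩⟩
      · exact ⟨by linarith, Or.inl (by linarith)⟩
      · refine ⟨by linarith, Or.inr ⟨-b, ?_, by linarith⟩⟩
        rw [gap_neg_iff]
        simpa using hb
  rw [rightBridgeEndE, leftBridgeEndE, hset, real_sInf_neg]

lemma lB_neg (K : Set ℝ) (u ℓ ε : ℝ) :
    leftBridgeEndE (-K) (-u) ℓ ε = - rightBridgeEndE K u ℓ ε := by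
  have := rB_neg (-K) (-u) ℓ ε
  simp only [neg_neg] at this
  linarith

lemma values_neg_subset (K : Set ℝ) (ε : ℝ) :
    epsThicknessValues (-K) ε ⊆ epsThicknessValues K ε := by
  rintro r ⟨a, b, hgap, hr | hr⟩
  · refine ⟨-b, -a, gap_neg_iff.mp hgap, Or.inr ?_⟩
    have h1 : rightBridgeEndE (-K) b (b - a) ε = - leftBridgeEndE K (-b) (b - a) ε := by
      have := rB_neg K (-b) (b - a) ε
      simpa using this
    rw [hr, h1, show -a - -b = b - a from by ring]
    ring
  · refine ⟨-b, -a, gap_neg_iff.mp hgap, Or.inl ?_⟩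
    have h1 : leftBridgeEndE (-K) a (b - a) ε = - rightBridgeEndE K (-a) (b - a) ε := by
      have := lB_neg K (-a) (b - a) ε
      simpa using this
    rw [hr, h1, show -a - -b = b - a from by ring]
    ring

lemma values_neg (K : Set ℝ) (ε : ℝ) :
    epsThicknessValues (-K) ε = epsThicknessValues K ε := by
  refine Subset.antisymm (values_neg_subset K ε) ?_
  have := values_neg_subset (-K) ε
  simpa using this

lemma ordConnected_neg {I : Set ℝ} (h : I.OrdConnected) : (-I).OrdConnected := by
  constructor
  rintro x hx y hy z hz
  have : -z ∈ Icc (-y) (-x) := ⟨by linarith [hz.2], by linarith [hz.1]⟩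
  exact h.out (Set.mem_neg.mp hy) (Set.mem_neg.mp hx) this

lemma interior_neg' (s : Set ℝ) : interior (-s) = -interior s := by
  have := (Homeomorph.neg ℝ).preimage_interior s
  simpa [← Set.neg_preimage] using this.symm

lemma image_reflect (g : ℝ → ℝ) (s : Set ℝ) :
    (fun x => -g (-x)) '' (-s) = -(g '' s) := by
  ext y
  simp only [Set.mem_neg, Set.mem_image]
  constructor
  · rintro ⟨x, hx, rfl⟩
    exact ⟨-x, by simpa using hx, by simp⟩
  · rintro ⟨x, hx, hxy⟩
    exact ⟨-x, by simpa using hx, by rw [neg_neg, hxy, neg_neg]⟩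

lemma image_neg_comp (g : ℝ → ℝ) (s : Set ℝ) :
    (fun x => -g x) '' s = -(g '' s) := by
  rw [show (fun x => -g x) = Neg.neg ∘ g from rfl, Set.image_comp, Set.image_neg_eq_neg]

/-! ### The core lemma : increasing case, right bridge -/

lemma core_right {I C : Set ℝ} (hI : I.OrdConnected) (hCI : C ⊆ I)
    (hclosed : IsClosed C) (hbdd : BddAbove C)
    (hacc : ∀ x ∈ C, ∀ U ∈ nhds x, ∃ y ∈ U ∩ C, y ≠ x)
    {ε : ℝ} (hε0 : 0 < ε) (hε1 : ε < 1) {g g' : ℝ → ℝ}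
    (hderiv : ∀ x ∈ I, HasDerivWithinAt g (g' x) I x)
    (hpos : ∀ x ∈ interior I, 0 < g' x)
    (hratio : ∀ x ∈ I, ∀ y ∈ I, |(|g' x| / |g' y|) - 1| < ε)
    (hsm : StrictMonoOn g I)
    {a b : ℝ} (hab : IsBoundedGap C a b) :
    b ≤ rightBridgeEndE C b (b - a) ε ∧
    g '' Icc b (rightBridgeEndE C b (b - a) ε) ⊆
      Icc (g b) (rightBridgeEndE (g '' C) (g b) (g b - g a) (ε ^ 2)) ∧
    (1 - ε) * ((rightBridgeEndE C b (b - a) ε - b) / (b - a)) ≤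
      (rightBridgeEndE (g '' C) (g b) (g b - g a) (ε ^ 2) - g b) / (g b - g a) := by
  obtain ⟨hab_lt, haC, hbC, hgapC⟩ := hab
  have haI := hCI haC
  have hbI := hCI hbC
  have hgc : ContinuousOn g I := fun x hx => (hderiv x hx).continuousWithinAt
  -- mean value helper
  have key : ∀ p q : ℝ, p ∈ I → q ∈ I → p < q →
      ∃ c, c ∈ interior I ∧ 0 < g' c ∧ g q - g p = g' c * (q - p) := by
    intro p q hp hq hpq
    have hIcc : Icc p q ⊆ I := hI.out hp hq
    have hIoo : Ioo p q ⊆ interior I :=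
      (isOpen_Ioo.subset_interior_iff).mpr (fun x hx => hIcc (Ioo_subset_Icc_self hx))
    have hd : ∀ x ∈ Ioo p q, HasDerivAt g (g' x) x := fun x hx =>
      (hderiv x (hIcc (Ioo_subset_Icc_self hx))).hasDerivAt
        (mem_interior_iff_mem_nhds.mp (hIoo hx))
    obtain ⟨c, hc, hceq⟩ := exists_hasDerivAt_eq_slope g g' hpq (hgc.mono hIcc) hd
    refine ⟨c, hIoo hc, hpos c (hIoo hc), ?_⟩
    rw [hceq]
    exact (div_mul_cancel₀ _ (ne_of_gt (sub_pos.mpr hpq))).symm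
  -- ratio comparison helper
  have hcmp : ∀ c ∈ interior I, ∀ d ∈ interior I,
      g' c < (1 + ε) * g' d ∧ (1 - ε) * g' d < g' c := by
    intro c hc d hd
    have h1 := hratio c (interior_subset hc) d (interior_subset hd)
    have hc0 := hpos c hc
    have hd0 := hpos d hd
    rw [abs_of_pos hc0, abs_of_pos hd0, abs_lt] at h1
    constructor
    · have h2 : g' c / g' d < 1 + ε := by linarith [h1.2]
      rw [div_lt_iff₀ hd0] at h2
      linarith
    · have h2 : 1 - ε < g' c / g' d := by linarith [h1.1]
      rw [lt_div_iff₀ hd0] at h2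
      linarith
  -- b < sSup C
  obtain ⟨y, hyU, hyne⟩ := hacc b hbC (Ioo a (b + 1)) (Ioo_mem_nhds hab_lt (lt_add_one b))
  have hyb : b < y := by
    rcases lt_trichotomy y b with h | h | h
    · exfalso
      have : y ∈ Ioo a b ∩ C := ⟨⟨hyU.1.1, h⟩, hyU.2⟩
      rw [hgapC] at this
      exact this
    · exact absurd h hyne
    · exact h
  have hbsup : b < sSup C := lt_of_lt_of_le hyb (le_csSup hbdd hyU.2)
  -- the set defining the bridge end
  set S : Set ℝ := {x | b < x ∧ (x = sSup C ∨
      ∃ y, IsBoundedGap C x y ∧ (1 - ε) * (b - a) < y - x)} with hSdef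
  have hAdef : rightBridgeEndE C b (b - a) ε = sInf S := rfl
  have hSsup : sSup C ∈ S := ⟨hbsup, Or.inl rfl⟩
  have hSlb : ∀ s ∈ S, b ≤ s := fun s hs => le_of_lt hs.1
  have hSbdd : BddBelow S := ⟨b, hSlb⟩
  have hbA : b ≤ sInf S := le_csInf ⟨_, hSsup⟩ hSlb
  have hsupC : sSup C ∈ C := hclosed.csSup_mem ⟨b, hbC⟩ hbdd
  have hsupI : sSup C ∈ I := hCI hsupC
  have hSC : S ⊆ C := by
    rintro s ⟨hs1, hs2 | ⟨b', hgap', _⟩⟩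
    · rw [hs2]; exact hsupC
    · exact hgap'.2.1
  have hAC : sInf S ∈ C := by
    have h1 : sInf S ∈ closure S := csInf_mem_closure ⟨_, hSsup⟩ hSbdd
    have h2 : closure S ⊆ C := hclosed.closure_eq ▸ closure_mono hSC
    exact h2 h1
  have hAI : sInf S ∈ I := hCI hAC
  have hIccI : Icc b (sInf S) ⊆ I := hI.out hbI hAI
  have hgab : g a < g b := hsm haI hbI hab_lt
  have hgsup : IsGreatest (g '' C) (g (sSup C)) :=
    ⟨⟨_, hsupC, rfl⟩, by
      rintro y ⟨x, hx, rfl⟩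
      exact hsm.monotoneOn (hCI hx) hsupI (le_csSup hbdd hx)⟩
  have hsup_img : sSup (g '' C) = g (sSup C) := hgsup.csSup_eq
  -- the set defining the image bridge end
  set S' : Set ℝ := {z | g b < z ∧ (z = sSup (g '' C) ∨
      ∃ y, IsBoundedGap (g '' C) z y ∧ (1 - ε ^ 2) * (g b - g a) < y - z)} with hS'def
  have hA'def : rightBridgeEndE (g '' C) (g b) (g b - g a) (ε ^ 2) = sInf S' := rfl
  have hS'ne : sSup (g '' C) ∈ S' := by
    refine ⟨?_, Or.inl rfl⟩
    rw [hsup_img]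
    exact hsm hbI hsupI hbsup
  have hglb : ∀ z ∈ S', g (sInf S) ≤ z := by
    rintro z ⟨hz1, hz2 | ⟨y₂, hgap', hlen⟩⟩
    · rw [hz2, hsup_img]
      exact hsm.monotoneOn hAI hsupI (csInf_le hSbdd hSsup)
    · obtain ⟨hzy, hzK, hy₂K, hgap2⟩ := hgap'
      obtain ⟨p, hpC, rfl⟩ := hzK
      obtain ⟨q, hqC, rfl⟩ := hy₂K
      have hpI := hCI hpC
      have hqI := hCI hqC
      have hpq : p < q := by
        by_contra h
        push_neg at h
        exact absurd (hsm.monotoneOn hqI hpI h) (not_le.mpr hzy)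
      have hbp : b < p := by
        by_contra h
        push_neg at h
        exact absurd (hsm.monotoneOn hpI hbI h) (not_le.mpr hz1)
      have hgapC' : Ioo p q ∩ C = ∅ := by
        rw [eq_empty_iff_forall_notMem]
        rintro x ⟨hx, hxC⟩
        have : g x ∈ Ioo (g p) (g q) ∩ (g '' C) :=
          ⟨⟨hsm hpI (hCI hxC) hx.1, hsm (hCI hxC) hqI hx.2⟩, ⟨x, hxC, rfl⟩⟩
        rw [hgap2] at this
        exact this
      obtain ⟨c, hcI, hc0, hceq⟩ := key p q hpI hqI hpq
      obtain ⟨d, hdI, hd0, hdeq⟩ := key a b haI hbI hab_lt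
      have hcd := (hcmp c hcI d hdI).1
      have e1 : (1 - ε ^ 2) * (g' d * (b - a)) < g' c * (q - p) := by
        rw [← hdeq, ← hceq]; exact hlen
      have e2 : g' c * (q - p) < ((1 + ε) * g' d) * (q - p) :=
        mul_lt_mul_of_pos_right hcd (sub_pos.mpr hpq)
      have e4 : (0:ℝ) < (1 + ε) * g' d := mul_pos (by linarith) hd0
      have e3' : ((1 + ε) * g' d) * ((1 - ε) * (b - a)) < ((1 + ε) * g' d) * (q - p) := by
        calc ((1 + ε) * g' d) * ((1 - ε) * (b - a))
            = (1 - ε ^ 2) * (g' d * (b - a)) := by ring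
          _ < g' c * (q - p) := e1
          _ < ((1 + ε) * g' d) * (q - p) := e2
      have hlen' : (1 - ε) * (b - a) < q - p := (mul_lt_mul_iff_right₀ e4).mp e3'
      have hpS : p ∈ S := ⟨hbp, Or.inr ⟨q, ⟨hpq, hpC, hqC, hgapC'⟩, hlen'⟩⟩
      exact hsm.monotoneOn hAI hpI (csInf_le hSbdd hpS)
  have hA'ge : g (sInf S) ≤ sInf S' := le_csInf ⟨_, hS'ne⟩ hglb
  rw [hAdef, hA'def]
  refine ⟨hbA, ?_, ?_⟩
  · rintro y ⟨t, ht, rfl⟩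
    have htI : t ∈ I := hIccI ht
    exact ⟨hsm.monotoneOn hbI htI ht.1,
      le_trans (hsm.monotoneOn htI hAI ht.2) hA'ge⟩
  · rcases eq_or_lt_of_le hbA with heq | hlt
    · rw [← heq]
      simp only [sub_self, zero_div, mul_zero]
      apply div_nonneg
      · rw [← heq] at hA'ge
        linarith
      · linarith
    · obtain ⟨c, hcI, hc0, hceq⟩ := key b (sInf S) hbI hAI hlt
      obtain ⟨d, hdI, hd0, hdeq⟩ := key a b haI hbI hab_lt
      have hcd2 := (hcmp c hcI d hdI).2
      have h1 : (g (sInf S) - g b) / (g b - g a) ≤ (sInf S' - g b) / (g b - g a) :=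
        (div_le_div_iff_of_pos_right (sub_pos.mpr hgab)).mpr (by linarith)
      refine le_trans ?_ h1
      rw [hceq, hdeq, ← mul_div_assoc,
        div_le_div_iff₀ (sub_pos.mpr hab_lt) (mul_pos hd0 (sub_pos.mpr hab_lt))]
      nlinarith [mul_lt_mul_of_pos_right hcd2
        (mul_pos (sub_pos.mpr hlt) (sub_pos.mpr hab_lt))]

/-! ### Main lemma for strictly increasing maps -/

lemma main_inc {I C : Set ℝ} (hI : I.OrdConnected) (hCI : C ⊆ I)
    (hcomp : IsCompact C)
    (hacc : ∀ x ∈ C, ∀ U ∈ nhds x, ∃ y ∈ U ∩ C, y ≠ x)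
    {ε : ℝ} (hε0 : 0 < ε) (hε1 : ε < 1) {g g' : ℝ → ℝ}
    (hderiv : ∀ x ∈ I, HasDerivWithinAt g (g' x) I x)
    (hpos : ∀ x ∈ interior I, 0 < g' x)
    (hratio : ∀ x ∈ I, ∀ y ∈ I, |(|g' x| / |g' y|) - 1| < ε)
    (hsm : StrictMonoOn g I)
    (hex : ∃ p q, IsBoundedGap C p q) :
    (∀ a b : ℝ, IsBoundedGap C a b →
      g '' Icc b (rightBridgeEndE C b (b - a) ε) ⊆
        Icc (g b) (rightBridgeEndE (g '' C) (g b) (g b - g a) (ε ^ 2)) ∧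
      g '' Icc (leftBridgeEndE C a (b - a) ε) a ⊆
        Icc (leftBridgeEndE (g '' C) (g a) (g b - g a) (ε ^ 2)) (g a)) ∧
    (1 - ε) * epsThickness C ε ≤ epsThickness (g '' C) (ε ^ 2) := by
  have hclosed := hcomp.isClosed
  have hbdd := hcomp.bddAbove
  -- reflected data
  have hI' := ordConnected_neg hI
  have hCI' : -C ⊆ -I := Set.neg_subset_neg.mpr hCI
  have hclosed' : IsClosed (-C) := hcomp.neg.isClosed
  have hbdd' : BddAbove (-C) := hcomp.bddBelow.neg
  have hacc' : ∀ x ∈ -C, ∀ U ∈ nhds x, ∃ y ∈ U ∩ (-C), y ≠ x := by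
    intro x hx U hU
    have h1 : Neg.neg ⁻¹' U ∈ nhds (-x) :=
      (continuous_neg.continuousAt (x := -x)).preimage_mem_nhds (by simpa using hU)
    obtain ⟨y, ⟨hyU, hyC⟩, hyne⟩ := hacc (-x) hx (Neg.neg ⁻¹' U) h1
    refine ⟨-y, ⟨hyU, by simpa using hyC⟩, ?_⟩
    intro h
    exact hyne (by rw [← h, neg_neg])
  have hderiv' : ∀ x ∈ -I, HasDerivWithinAt (fun z => -g (-z)) (g' (-x)) (-I) x := by
    intro x hx
    have hneg : HasDerivWithinAt (fun z : ℝ => -z) (-1) (-I) x :=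
      (hasDerivAt_neg x).hasDerivWithinAt
    have hmap : Set.MapsTo (fun z : ℝ => -z) (-I) I := fun z hz => Set.mem_neg.mp hz
    have h2 := HasDerivWithinAt.comp x (hderiv (-x) (Set.mem_neg.mp hx)) hneg hmap
    have h3 := h2.neg
    exact h3.congr_deriv (by ring)
  have hpos' : ∀ x ∈ interior (-I), 0 < g' (-x) := by
    intro x hx
    rw [interior_neg'] at hx
    exact hpos (-x) (Set.mem_neg.mp hx)
  have hratio' : ∀ x ∈ -I, ∀ y ∈ -I, |(|g' (-x)| / |g' (-y)|) - 1| < ε :=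
    fun x hx y hy => hratio _ (Set.mem_neg.mp hx) _ (Set.mem_neg.mp hy)
  have hsm' : StrictMonoOn (fun z => -g (-z)) (-I) := by
    intro x hx y hy hxy
    have := hsm (Set.mem_neg.mp hy) (Set.mem_neg.mp hx) (by linarith)
    dsimp only
    linarith
  -- right-bridge facts
  have hright : ∀ a b : ℝ, IsBoundedGap C a b →
      b ≤ rightBridgeEndE C b (b - a) ε ∧
      g '' Icc b (rightBridgeEndE C b (b - a) ε) ⊆
        Icc (g b) (rightBridgeEndE (g '' C) (g b) (g b - g a) (ε ^ 2)) ∧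
      (1 - ε) * ((rightBridgeEndE C b (b - a) ε - b) / (b - a)) ≤
        (rightBridgeEndE (g '' C) (g b) (g b - g a) (ε ^ 2) - g b) / (g b - g a) :=
    fun a b hab => core_right hI hCI hclosed hbdd hacc hε0 hε1 hderiv hpos hratio hsm hab
  -- left-bridge facts via reflection
  have hrefl : ∀ a b : ℝ, IsBoundedGap C a b →
      leftBridgeEndE C a (b - a) ε ≤ a ∧
      g '' Icc (leftBridgeEndE C a (b - a) ε) a ⊆
        Icc (leftBridgeEndE (g '' C) (g a) (g b - g a) (ε ^ 2)) (g a) ∧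
      (1 - ε) * ((a - leftBridgeEndE C a (b - a) ε) / (b - a)) ≤
        (g a - leftBridgeEndE (g '' C) (g a) (g b - g a) (ε ^ 2)) / (g b - g a) := by
    intro a b hab
    obtain ⟨h1, h2, h3⟩ := core_right hI' hCI' hclosed' hbdd' hacc' hε0 hε1 hderiv' hpos'
      hratio' hsm' (gap_neg hab)
    simp only [neg_neg] at h1 h2 h3
    rw [show -a - -b = b - a from by ring] at h1 h2 h3
    rw [rB_neg C a (b - a) ε] at h1 h2 h3
    rw [image_reflect g C] at h2 h3
    rw [show -g a - -g b = g b - g a from by ring] at h2 h3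
    rw [rB_neg (g '' C) (g a) (g b - g a) (ε ^ 2)] at h2 h3
    refine ⟨by linarith, ?_, ?_⟩
    · rintro y ⟨t, ht, rfl⟩
      have hmem : -t ∈ Icc (-a) (-(leftBridgeEndE C a (b - a) ε)) :=
        ⟨neg_le_neg ht.2, neg_le_neg ht.1⟩
      have h2' := h2 (Set.mem_image_of_mem _ hmem)
      simp only [neg_neg, Set.mem_Icc] at h2'
      exact ⟨by linarith [h2'.2], by linarith [h2'.1]⟩
    · rw [show -(leftBridgeEndE C a (b - a) ε) - -a
          = a - leftBridgeEndE C a (b - a) ε from by ring,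
        show -(leftBridgeEndE (g '' C) (g a) (g b - g a) (ε ^ 2)) - -g a
          = g a - leftBridgeEndE (g '' C) (g a) (g b - g a) (ε ^ 2) from by ring] at h3
      exact h3
  -- gap correspondences
  have img_gap : ∀ p q : ℝ, IsBoundedGap C p q → IsBoundedGap (g '' C) (g p) (g q) := by
    rintro p q ⟨hpq, hp, hq, hgap⟩
    refine ⟨hsm (hCI hp) (hCI hq) hpq, ⟨p, hp, rfl⟩, ⟨q, hq, rfl⟩, ?_⟩
    rw [eq_empty_iff_forall_notMem]
    rintro y ⟨hy, x, hxC, rfl⟩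
    have hpx : p < x := by
      by_contra h
      push_neg at h
      exact absurd (hsm.monotoneOn (hCI hxC) (hCI hp) h) (not_le.mpr hy.1)
    have hxq : x < q := by
      by_contra h
      push_neg at h
      exact absurd (hsm.monotoneOn (hCI hq) (hCI hxC) h) (not_le.mpr hy.2)
    have : x ∈ Ioo p q ∩ C := ⟨⟨hpx, hxq⟩, hxC⟩
    rw [hgap] at this
    exact this
  have gap_img : ∀ u v : ℝ, IsBoundedGap (g '' C) u v →
      ∃ p q : ℝ, IsBoundedGap C p q ∧ u = g p ∧ v = g q := by
    rintro u v ⟨huv, ⟨p, hp, rfl⟩, ⟨q, hq, rfl⟩, hgap⟩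
    have hpq : p < q := by
      by_contra h
      push_neg at h
      exact absurd (hsm.monotoneOn (hCI hq) (hCI hp) h) (not_le.mpr huv)
    refine ⟨p, q, ⟨hpq, hp, hq, ?_⟩, rfl, rfl⟩
    rw [eq_empty_iff_forall_notMem]
    rintro x ⟨hx, hxC⟩
    have : g x ∈ Ioo (g p) (g q) ∩ (g '' C) :=
      ⟨⟨hsm (hCI hp) (hCI hxC) hx.1, hsm (hCI hxC) (hCI hq) hx.2⟩, ⟨x, hxC, rfl⟩⟩
    rw [hgap] at this
    exact this
  -- values are nonnegative
  have hval0 : ∀ r ∈ epsThicknessValues C ε, 0 ≤ r := by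
    rintro r ⟨p, q, hpq, hr | hr⟩
    · rw [hr]
      exact div_nonneg (by linarith [(hright p q hpq).1]) (by linarith [hpq.1])
    · rw [hr]
      exact div_nonneg (by linarith [(hrefl p q hpq).1]) (by linarith [hpq.1])
  have hbddval : BddBelow (epsThicknessValues C ε) := ⟨0, hval0⟩
  refine ⟨fun a b hab => ⟨(hright a b hab).2.1, (hrefl a b hab).2.1⟩, ?_⟩
  have hVne : (epsThicknessValues (g '' C) (ε ^ 2)).Nonempty := by
    obtain ⟨p, q, h⟩ := hex
    exact ⟨_, g p, g q, img_gap p q h, Or.inl rfl⟩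
  rw [epsThickness]
  apply le_csInf hVne
  rintro r ⟨u, v, huv, hr⟩
  obtain ⟨p, q, hpq, rfl, rfl⟩ := gap_img u v huv
  rcases hr with hr | hr
  · have h2 := (hright p q hpq).2.2
    have h3 : epsThickness C ε ≤ (rightBridgeEndE C q (q - p) ε - q) / (q - p) :=
      csInf_le hbddval ⟨p, q, hpq, Or.inl rfl⟩
    rw [hr]
    calc (1 - ε) * epsThickness C ε
        ≤ (1 - ε) * ((rightBridgeEndE C q (q - p) ε - q) / (q - p)) :=
          mul_le_mul_of_nonneg_left h3 (by linarith)
      _ ≤ _ := h2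
  · have h2 := (hrefl p q hpq).2.2
    have h3 : epsThickness C ε ≤ (p - leftBridgeEndE C p (q - p) ε) / (q - p) :=
      csInf_le hbddval ⟨p, q, hpq, Or.inr rfl⟩
    rw [hr]
    calc (1 - ε) * epsThickness C ε
        ≤ (1 - ε) * ((p - leftBridgeEndE C p (q - p) ε) / (q - p)) :=
          mul_le_mul_of_nonneg_left h3 (by linarith)
      _ ≤ _ := h2

/-! ### Existence of a bounded gap -/

lemma exists_gap {C : Set ℝ} (hclosed : IsClosed C) (htd : IsTotallyDisconnected C)
    {x y : ℝ} (hx : x ∈ C) (hy : y ∈ C) (hxy : x < y) :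
    ∃ p q : ℝ, IsBoundedGap C p q := by
  have hnot : ¬ Icc x y ⊆ C := by
    intro hsub
    have := htd (Icc x y) hsub isPreconnected_Icc
      (left_mem_Icc.mpr hxy.le) (right_mem_Icc.mpr hxy.le)
    exact hxy.ne this
  obtain ⟨z, hz, hzC⟩ := not_subset.mp hnot
  have hxz : x < z := lt_of_le_of_ne hz.1 (fun h => hzC (h ▸ hx))
  have hzy : z < y := lt_of_le_of_ne hz.2 (fun h => hzC (h.symm ▸ hy))
  have h1 : (C ∩ Iic z).Nonempty := ⟨x, hx, hxz.le⟩
  have hb1 : BddAbove (C ∩ Iic z) := ⟨z, fun w hw => hw.2⟩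
  have hcl1 : IsClosed (C ∩ Iic z) := hclosed.inter isClosed_Iic
  have hpmem := hcl1.csSup_mem h1 hb1
  have h2 : (C ∩ Ici z).Nonempty := ⟨y, hy, hzy.le⟩
  have hb2 : BddBelow (C ∩ Ici z) := ⟨z, fun w hw => hw.2⟩
  have hcl2 : IsClosed (C ∩ Ici z) := hclosed.inter isClosed_Ici
  have hqmem := hcl2.csInf_mem h2 hb2
  have hpz : sSup (C ∩ Iic z) < z :=
    lt_of_le_of_ne hpmem.2 (fun h => hzC (h ▸ hpmem.1))
  have hzq : z < sInf (C ∩ Ici z) :=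
    lt_of_le_of_ne hqmem.2 (fun h => hzC (h.symm ▸ hqmem.1))
  refine ⟨_, _, hpz.trans hzq, hpmem.1, hqmem.1, ?_⟩
  rw [eq_empty_iff_forall_notMem]
  rintro w ⟨hw, hwC⟩
  rcases le_or_gt w z with h | h
  · exact absurd (le_csSup hb1 ⟨hwC, h⟩) (not_le.mpr hw.1)
  · exact absurd (csInf_le hb2 ⟨hwC, h.le⟩) (not_le.mpr hw.2)


/-- **Lemma.** Let `K̃ := K ∩ I` be a Cantor set, `ε ∈ (0,1)`, and let `g` be a continuously
differentiable monotone function on the interval `I` with `| |g'(x)|/|g'(y)| − 1 | < ε` on `I`.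
Then for every endpoint `u` of a bounded gap of `K̃`, the image of the `ε`-bridge of `K̃` at `u`
is contained in the `ε²`-bridge of `g(K̃)` at `g(u)` (with the appropriate orientation according
to whether `g` is increasing or decreasing), and consequently
`τ_{ε²}(g(K̃)) ≥ (1 − ε) · τ_ε(K̃)`. -/
theorem eps_bridge_image_subset (K : Set ℝ) (hK : IsCantorSet K)
    (I : Set ℝ) (hI : I.OrdConnected) (hKI : IsCantorSet (K ∩ I))
    (ε : ℝ) (hε0 : 0 < ε) (hε1 : ε < 1) (g g' : ℝ → ℝ)
    (hderiv : ∀ x ∈ I, HasDerivWithinAt g (g' x) I x)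
    (hcont : ContinuousOn g' I)
    (hmono : MonotoneOn g I ∨ AntitoneOn g I)
    (hratio : ∀ x ∈ I, ∀ y ∈ I, |(|g' x| / |g' y|) - 1| < ε) :
    (∀ a b : ℝ, IsBoundedGap (K ∩ I) a b →
      -- the bridge at the right endpoint `b` of the gap `(a,b)`
      ((MonotoneOn g I →
          g '' Icc b (rightBridgeEndE (K ∩ I) b (b - a) ε) ⊆
            Icc (g b) (rightBridgeEndE (g '' (K ∩ I)) (g b) (g b - g a) (ε ^ 2))) ∧
       (AntitoneOn g I →
          g '' Icc b (rightBridgeEndE (K ∩ I) b (b - a) ε) ⊆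
            Icc (leftBridgeEndE (g '' (K ∩ I)) (g b) (g a - g b) (ε ^ 2)) (g b)) ∧
      -- the bridge at the left endpoint `a` of the gap `(a,b)`
       (MonotoneOn g I →
          g '' Icc (leftBridgeEndE (K ∩ I) a (b - a) ε) a ⊆
            Icc (leftBridgeEndE (g '' (K ∩ I)) (g a) (g b - g a) (ε ^ 2)) (g a)) ∧
       (AntitoneOn g I →
          g '' Icc (leftBridgeEndE (K ∩ I) a (b - a) ε) a ⊆
            Icc (g a) (rightBridgeEndE (g '' (K ∩ I)) (g a) (g a - g b) (ε ^ 2))))) ∧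
    epsThickness (g '' (K ∩ I)) (ε ^ 2) ≥ (1 - ε) * epsThickness (K ∩ I) ε := by
  obtain ⟨hne, hcomp, hperf, htd⟩ := hKI
  have hCI : K ∩ I ⊆ I := Set.inter_subset_right
  have hacc : ∀ x ∈ K ∩ I, ∀ U ∈ nhds x, ∃ y ∈ U ∩ (K ∩ I), y ≠ x := by
    intro x hx U hU
    have := hperf.acc x hx
    rw [accPt_iff_nhds] at this
    exact this U hU
  -- two distinct points in K ∩ I
  obtain ⟨x₀, hx₀⟩ := hne
  obtain ⟨y₀, hy₀mem, hy₀ne⟩ := hacc x₀ hx₀ univ Filter.univ_mem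
  obtain ⟨u, v, huC, hvC, huv⟩ : ∃ u v : ℝ, u ∈ K ∩ I ∧ v ∈ K ∩ I ∧ u < v := by
    rcases lt_or_gt_of_ne hy₀ne with h | h
    · exact ⟨y₀, x₀, hy₀mem.2, hx₀, h⟩
    · exact ⟨x₀, y₀, hx₀, hy₀mem.2, h⟩
  have huI : u ∈ I := hCI huC
  have hvI : v ∈ I := hCI hvC
  have hex : ∃ p q : ℝ, IsBoundedGap (K ∩ I) p q :=
    exists_gap hcomp.isClosed htd huC hvC huv
  have hgc : ContinuousOn g I := fun x hx => (hderiv x hx).continuousWithinAt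
  have hconv : Convex ℝ I := convex_iff_ordConnected.mpr hI
  have hne0 : ∀ x ∈ I, g' x ≠ 0 := by
    intro x hx h
    have := hratio x hx x hx
    rw [h] at this
    norm_num at this
    linarith
  by_cases hcase : ∀ x ∈ interior I, 0 < g' x
  · -- increasing case
    have hsm : StrictMonoOn g I := by
      apply strictMonoOn_of_deriv_pos hconv hgc
      intro x hx
      have h := (hderiv x (interior_subset hx)).hasDerivAt (mem_interior_iff_mem_nhds.mp hx)
      rw [h.deriv]
      exact hcase x hx
    obtain ⟨hbridge, hthick⟩ :=
      main_inc hI hCI hcomp hacc hε0 hε1 hderiv hcase hratio hsm hex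
    have hnotanti : ¬ AntitoneOn g I := fun h =>
      absurd (h huI hvI huv.le) (not_le.mpr (hsm huI hvI huv))
    refine ⟨fun a b hab => ⟨fun _ => (hbridge a b hab).1, fun h => absurd h hnotanti,
      fun _ => (hbridge a b hab).2, fun h => absurd h hnotanti⟩, hthick⟩
  · -- decreasing case
    have hneg : ∀ x ∈ interior I, g' x < 0 := by
      push_neg at hcase
      obtain ⟨x₁, hx₁, hx₁0⟩ := hcase
      have hx₁neg : g' x₁ < 0 := lt_of_le_of_ne hx₁0 (hne0 x₁ (interior_subset hx₁))
      intro z hz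
      by_contra h
      push_neg at h
      have hz0 : 0 < g' z := lt_of_le_of_ne h (Ne.symm (hne0 z (interior_subset hz)))
      have hioc : (interior I).OrdConnected := hconv.interior.ordConnected
      have huIcc : uIcc x₁ z ⊆ interior I := hioc.uIcc_subset hx₁ hz
      have hcontu : ContinuousOn g' (uIcc x₁ z) := hcont.mono (huIcc.trans interior_subset)
      have h0 : (0:ℝ) ∈ uIcc (g' x₁) (g' z) := Set.mem_uIcc.mpr (Or.inl ⟨hx₁neg.le, hz0.le⟩)
      obtain ⟨w, hwu, hw0⟩ := intermediate_value_uIcc hcontu h0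
      exact hne0 w (interior_subset (huIcc hwu)) hw0
    have hsa : StrictAntiOn g I := by
      apply strictAntiOn_of_deriv_neg hconv hgc
      intro x hx
      have h := (hderiv x (interior_subset hx)).hasDerivAt (mem_interior_iff_mem_nhds.mp hx)
      rw [h.deriv]
      exact hneg x hx
    have hderivn : ∀ x ∈ I, HasDerivWithinAt (fun z => -g z) (-(g' x)) I x :=
      fun x hx => (hderiv x hx).neg
    have hposn : ∀ x ∈ interior I, 0 < -(g' x) := fun x hx => by linarith [hneg x hx]
    have hration : ∀ x ∈ I, ∀ y ∈ I, |(|-(g' x)| / |-(g' y)|) - 1| < ε := by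
      intro x hx y hy
      simpa [abs_neg] using hratio x hx y hy
    have hsmn : StrictMonoOn (fun z => -g z) I := by
      intro x hx y hy h
      dsimp only
      linarith [hsa hx hy h]
    obtain ⟨hbridge, hthick⟩ :=
      main_inc hI hCI hcomp hacc hε0 hε1 hderivn hposn hration hsmn hex
    have hnotmono : ¬ MonotoneOn g I := fun h =>
      absurd (h huI hvI huv.le) (not_le.mpr (hsa huI hvI huv))
    have hthick' : epsThickness (g '' (K ∩ I)) (ε ^ 2) ≥ (1 - ε) * epsThickness (K ∩ I) ε := by
      rw [image_neg_comp g (K ∩ I)] at hthick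
      have heq : epsThickness (-(g '' (K ∩ I))) (ε ^ 2) = epsThickness (g '' (K ∩ I)) (ε ^ 2) := by
        rw [epsThickness, epsThickness, values_neg]
      rw [heq] at hthick
      exact hthick
    refine ⟨fun a b hab => ⟨fun h => absurd h hnotmono, ?_, fun h => absurd h hnotmono, ?_⟩,
      hthick'⟩
    · intro _
      have h := (hbridge a b hab).1
      rw [image_neg_comp g (K ∩ I)] at h
      rw [show -g b - -g a = g a - g b from by ring] at h
      rw [rB_neg (g '' (K ∩ I)) (g b) (g a - g b) (ε ^ 2)] at h
      rintro y ⟨t, ht, rfl⟩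
      have h' := h (Set.mem_image_of_mem _ ht)
      simp only [Set.mem_Icc] at h' ⊢
      exact ⟨by linarith [h'.2], by linarith [h'.1]⟩
    · intro _
      have h := (hbridge a b hab).2
      rw [image_neg_comp g (K ∩ I)] at h
      rw [show -g b - -g a = g a - g b from by ring] at h
      rw [lB_neg (g '' (K ∩ I)) (g a) (g a - g b) (ε ^ 2)] at h
      rintro y ⟨t, ht, rfl⟩
      have h' := h (Set.mem_image_of_mem _ ht)
      simp only [Set.mem_Icc] at h' ⊢
      exact ⟨by linarith [h'.2], by linarith [h'.1]⟩
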